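/- Φ'(x) = 2·log((x+2)/(x+1)) − (21 + 14x)/(16 + 21x + 7x²) is positive for all x ≥ 1. -/

import Mathlib

lemma key_log_bound : ∀ y : ℝ, 1 ≤ y → 2*(y-1)/(y+1) ≤ Real.log y := by
  have mono : MonotoneOn (fun y : ℝ => Real.log y - 2*(y-1)/(y+1)) (Set.Ici 1) := by
    apply monotoneOn_of_deriv_nonneg (convex_Ici 1)
    · apply ContinuousOn.sub
      · refine Real.continuousOn_log.mono ?_
        intro y hy
        simp only [Set.mem_Ici] at hy
        simp only [Set.mem_compl_iff, Set.mem_singleton_iff]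
        intro h; rw [h] at hy; linarith
      · apply ContinuousOn.div (by fun_prop) (by fun_prop)
        intro y hy; simp only [Set.mem_Ici] at hy; intro h; linarith
    · intro y hy
      rw [interior_Ici] at hy
      simp only [Set.mem_Ioi] at hy
      have h1 : y ≠ 0 := by linarith
      have h2 : y + 1 ≠ 0 := by linarith
      have hd : HasDerivAt (fun y : ℝ => Real.log y - 2*(y-1)/(y+1))
          (1/y - (2*1*(y+1) - 2*(y-1)*1)/(y+1)^2) y := by
        have hl := Real.hasDerivAt_log h1
        have hq : HasDerivAt (fun y : ℝ => 2*(y-1)/(y+1))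
            ((2*1*(y+1) - 2*(y-1)*1)/(y+1)^2) y := by
          exact (((hasDerivAt_id y).sub_const 1).const_mul 2).div
            ((hasDerivAt_id y).add_const 1) h2
        have := hl.sub hq; rw [← one_div] at this; exact this
      exact hd.differentiableAt.differentiableWithinAt
    · intro y hy
      rw [interior_Ici] at hy
      simp only [Set.mem_Ioi] at hy
      have h1 : y ≠ 0 := by linarith
      have h2 : y + 1 ≠ 0 := by linarith
      have hd : HasDerivAt (fun y : ℝ => Real.log y - 2*(y-1)/(y+1))
          (1/y - (2*1*(y+1) - 2*(y-1)*1)/(y+1)^2) y := by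
        have hl := Real.hasDerivAt_log h1
        have hq : HasDerivAt (fun y : ℝ => 2*(y-1)/(y+1))
            ((2*1*(y+1) - 2*(y-1)*1)/(y+1)^2) y := by
          exact (((hasDerivAt_id y).sub_const 1).const_mul 2).div
            ((hasDerivAt_id y).add_const 1) h2
        have := hl.sub hq; rw [← one_div] at this; exact this
      rw [hd.deriv]
      rw [sub_nonneg, div_le_div_iff₀ (by positivity) (by linarith)]
      nlinarith [sq_nonneg (y - 1)]
  intro y hy
  have := mono (Set.self_mem_Ici) (Set.mem_Ici.mpr hy) hy
  simp only [Real.log_one] at this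
  linarith [this]

theorem stmt7 : ∀ x : ℝ, 1 ≤ x →
    0 < 2 * Real.log ((x+2)/(x+1)) - (21 + 14*x)/(16 + 21*x + 7*x^2) := by
  intro x hx
  have hx1 : (0:ℝ) < x + 1 := by linarith
  have ht : (1:ℝ) ≤ (x+2)/(x+1) := by
    rw [le_div_iff₀ hx1]; linarith
  have hk := key_log_bound _ ht
  have heq : 2*((x+2)/(x+1)-1)/((x+2)/(x+1)+1) = 2/(2*x+3) := by
    rw [div_eq_div_iff]
    · field_simp; ring
    · have : (x+2)/(x+1)+1 > 0 := by positivity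
      linarith [div_nonneg (by linarith : (0:ℝ) ≤ x+2) hx1.le]
    · linarith
  rw [heq] at hk
  have hfinal : (21 + 14*x)/(16 + 21*x + 7*x^2) < 2 * (2/(2*x+3)) := by
    rw [show 2 * (2/(2*x+3)) = 4/(2*x+3) by ring]
    rw [div_lt_div_iff₀ (by nlinarith) (by linarith)]
    nlinarith
  linarith
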